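/- Suppose α₁, α₂ solve the coupled Riccati system: α₁' = (b₁²/m₁)α₁² + (2a+f₂²)α₁ + (b₂²/m₂)α₁α₂ - l₁, α₂' = (b₂²/m₂)α₂² + (2a+f₂²)α₂ + (b₁²/m₁)α₁α₂ - l₂, with α₁(0) = -r₁, α₂(0) = -r₂, under the condition b₁²/m₁ = b₂²/m₂ pointwise. Suppose β₁, β₂ solve the linear system β₁' = (a + (b₁²/m₁)α₁ + f₂²)β₁ + (b₂²/m₂)α₁β₂ + (b₁n₁+b₂n₂+c)α₁ + l₁k₁ and β₂' = (a + (b₂²/m₂)α₂ + f₂²)β₂ + (b₁²/m₁)α₂β₁ + (b₁n₁+b₂n₂+c)α₂ + l₂k₂ with β₁(0) = r₁h₁, β₂(0) = r₂h₂. Then β := β₁ + β₂ satisfies β' = (a + (b₁²/m₁)(α₁+α₂) + f₂²)β + (b₁n₁+b₂n₂+c)(α₁+α₂) + l₁k₁ + l₂k₂ with β(0) = r₁h₁ + r₂h₂. -/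

import Mathlib

open Set

theorem beta_sum (T : ℝ) (hT : 0 < T) (r₁ r₂ h₁ h₂ : ℝ)
    (a b₁ b₂ m₁ m₂ f₂ l₁ l₂ k₁ k₂ n₁ n₂ c α₁ α₂ β₁ β₂ : ℝ → ℝ)
    (hm₁ : ∀ t ∈ Icc (0:ℝ) T, 0 < m₁ t) (hm₂ : ∀ t ∈ Icc (0:ℝ) T, 0 < m₂ t)
    (hr₁ : 0 ≤ r₁) (hr₂ : 0 ≤ r₂)
    (hsym : ∀ t ∈ Icc (0:ℝ) T, b₁ t ^ 2 / m₁ t = b₂ t ^ 2 / m₂ t)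
    (hα₁0 : α₁ 0 = -r₁) (hα₂0 : α₂ 0 = -r₂)
    (hα₁ : ∀ t ∈ Icc (0:ℝ) T, HasDerivAt α₁
      (b₁ t ^ 2 / m₁ t * α₁ t ^ 2 + (2 * a t + f₂ t ^ 2) * α₁ t
        + b₂ t ^ 2 / m₂ t * (α₁ t * α₂ t) - l₁ t) t)
    (hα₂ : ∀ t ∈ Icc (0:ℝ) T, HasDerivAt α₂
      (b₂ t ^ 2 / m₂ t * α₂ t ^ 2 + (2 * a t + f₂ t ^ 2) * α₂ t
        + b₁ t ^ 2 / m₁ t * (α₁ t * α₂ t) - l₂ t) t)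
    (hβ₁0 : β₁ 0 = r₁ * h₁) (hβ₂0 : β₂ 0 = r₂ * h₂)
    (hβ₁ : ∀ t ∈ Icc (0:ℝ) T, HasDerivAt β₁
      ((a t + b₁ t ^ 2 / m₁ t * α₁ t + f₂ t ^ 2) * β₁ t
        + b₂ t ^ 2 / m₂ t * α₁ t * β₂ t
        + (b₁ t * n₁ t + b₂ t * n₂ t + c t) * α₁ t + l₁ t * k₁ t) t)
    (hβ₂ : ∀ t ∈ Icc (0:ℝ) T, HasDerivAt β₂
      ((a t + b₂ t ^ 2 / m₂ t * α₂ t + f₂ t ^ 2) * β₂ t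
        + b₁ t ^ 2 / m₁ t * α₂ t * β₁ t
        + (b₁ t * n₁ t + b₂ t * n₂ t + c t) * α₂ t + l₂ t * k₂ t) t) :
    (∀ t ∈ Icc (0:ℝ) T, HasDerivAt (fun s => β₁ s + β₂ s)
      ((a t + b₁ t ^ 2 / m₁ t * (α₁ t + α₂ t) + f₂ t ^ 2) * (β₁ t + β₂ t)
        + (b₁ t * n₁ t + b₂ t * n₂ t + c t) * (α₁ t + α₂ t)
        + l₁ t * k₁ t + l₂ t * k₂ t) t)
    ∧ β₁ 0 + β₂ 0 = r₁ * h₁ + r₂ * h₂ := by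
  refine ⟨fun t ht => ?_, by rw [hβ₁0, hβ₂0]⟩
  have h := (hβ₁ t ht).add (hβ₂ t ht)
  refine h.congr_deriv ?_
  rw [hsym t ht]
  ring
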